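/- Let μ be a finite positive Borel measure on a compact interval [a,b], let φ : [a,b] → ℝ be non-increasing and bounded, and let f, g : [a,b] → ℝ be μ-integrable functions with ∫_{[a,b]} f dμ = ∫_{[a,b]} g dμ. Suppose there exists c ∈ [a,b] such that f(x) ≥ g(x) for all x ∈ [a,c] and f(x) ≤ g(x) for all x ∈ (c,b]. Then ∫_{[a,b]} f(x) φ(x) dμ(x) ≥ ∫_{[a,b]} g(x) φ(x) dμ(x). -/

import Mathlib

open MeasureTheory Filter

/-- **Lemma 3.4 of the paper**: monotone weight comparison lemma.  If `f`
and `g` have the same `μ`-integral over `[a,b]`, `f ≥ g` on `[a,c]` and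
`f ≤ g` on `(c,b]`, and `φ` is non-increasing and bounded, then
`∫ f φ dμ ≥ ∫ g φ dμ`. -/
theorem monotone_weight_comparison
    (a b : ℝ) (hab : a ≤ b)
    (μ : Measure ℝ) [IsFiniteMeasure μ]
    (φ f g : ℝ → ℝ)
    (hφ : AntitoneOn φ (Set.Icc a b))
    (Cφ : ℝ) (hφbdd : ∀ x ∈ Set.Icc a b, |φ x| ≤ Cφ)
    (hf : IntegrableOn f (Set.Icc a b) μ)
    (hg : IntegrableOn g (Set.Icc a b) μ)
    (hfg : ∫ x in Set.Icc a b, f x ∂μ = ∫ x in Set.Icc a b, g x ∂μ)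
    (c : ℝ) (hc : c ∈ Set.Icc a b)
    (h₁ : ∀ x ∈ Set.Icc a c, g x ≤ f x)
    (h₂ : ∀ x ∈ Set.Ioc c b, f x ≤ g x) :
    ∫ x in Set.Icc a b, g x * φ x ∂μ ≤ ∫ x in Set.Icc a b, f x * φ x ∂μ := by
  -- clamped version of φ, antitone on all of ℝ
  set ψ : ℝ → ℝ := fun x => φ (min b (max a x)) with hψdef
  have hmem : ∀ x : ℝ, min b (max a x) ∈ Set.Icc a b := fun x =>
    ⟨le_min hab (le_max_left a x), min_le_left _ _⟩
  have hψeq : ∀ x ∈ Set.Icc a b, ψ x = φ x := by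
    intro x hx
    simp [hψdef, max_eq_right hx.1, min_eq_right hx.2]
  have hψanti : Antitone ψ := by
    intro x y hxy
    exact hφ (hmem x) (hmem y)
      (min_le_min le_rfl (max_le_max le_rfl hxy))
  have hψmeas : Measurable ψ := hψanti.measurable
  have hψbdd : ∀ x : ℝ, ‖ψ x‖ ≤ Cφ := fun x => hφbdd _ (hmem x)
  have hφc : φ c = ψ c := (hψeq c hc).symm
  -- integrability facts
  have hfψ : IntegrableOn (fun x => f x * ψ x) (Set.Icc a b) μ := by
    have := hf.bdd_mul hψmeas.aestronglyMeasurable (Eventually.of_forall hψbdd)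
    simpa [mul_comm, IntegrableOn] using this
  have hgψ : IntegrableOn (fun x => g x * ψ x) (Set.Icc a b) μ := by
    have := hg.bdd_mul hψmeas.aestronglyMeasurable (Eventually.of_forall hψbdd)
    simpa [mul_comm, IntegrableOn] using this
  have hsub : IntegrableOn (fun x => (f x - g x) * ψ x) (Set.Icc a b) μ := by
    have := hfψ.sub hgψ
    simpa [sub_mul, Pi.sub_def] using this
  have hsubc : IntegrableOn (fun x => (f x - g x) * φ c) (Set.Icc a b) μ :=
    (hf.sub hg).mul_const _
  have hsplit : Set.Icc a c ∪ Set.Ioc c b = Set.Icc a b :=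
    Set.Icc_union_Ioc_eq_Icc hc.1 hc.2
  have hdisj : Disjoint (Set.Icc a c) (Set.Ioc c b) := by
    apply Set.disjoint_left.mpr
    intro x hx hx'
    exact absurd hx.2 (not_le.mpr hx'.1)
  have hsub1 : Set.Icc a c ⊆ Set.Icc a b :=
    Set.Icc_subset_Icc le_rfl hc.2
  have hsub2 : Set.Ioc c b ⊆ Set.Icc a b :=
    Set.Ioc_subset_Icc_self.trans (Set.Icc_subset_Icc hc.1 le_rfl)
  -- key inequality on each piece
  have key1 : ∫ x in Set.Icc a c, (f x - g x) * φ c ∂μ ≤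
      ∫ x in Set.Icc a c, (f x - g x) * ψ x ∂μ := by
    apply setIntegral_mono_on (hsubc.mono_set hsub1) (hsub.mono_set hsub1)
      measurableSet_Icc
    intro x hx
    have hx' : x ∈ Set.Icc a b := hsub1 hx
    have h0 : 0 ≤ f x - g x := sub_nonneg.mpr (h₁ x hx)
    have hψle : ψ c ≤ ψ x := hψanti hx.2
    rw [hφc]
    exact mul_le_mul_of_nonneg_left hψle h0
  have key2 : ∫ x in Set.Ioc c b, (f x - g x) * φ c ∂μ ≤
      ∫ x in Set.Ioc c b, (f x - g x) * ψ x ∂μ := by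
    apply setIntegral_mono_on (hsubc.mono_set hsub2) (hsub.mono_set hsub2)
      measurableSet_Ioc
    intro x hx
    have h0 : f x - g x ≤ 0 := sub_nonpos.mpr (h₂ x hx)
    have hψle : ψ x ≤ ψ c := hψanti (le_of_lt hx.1)
    rw [hφc]
    nlinarith
  have hzero : ∫ x in Set.Icc a b, (f x - g x) * φ c ∂μ = 0 := by
    have : ∫ x in Set.Icc a b, (f x - g x) ∂μ = 0 := by
      rw [integral_sub hf hg, hfg, sub_self]
    rw [integral_mul_const, this, zero_mul]
  have key : 0 ≤ ∫ x in Set.Icc a b, (f x - g x) * ψ x ∂μ := by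
    rw [← hsplit] at hzero ⊢
    rw [setIntegral_union hdisj measurableSet_Ioc (hsub.mono_set hsub1)
      (hsub.mono_set hsub2)]
    rw [setIntegral_union hdisj measurableSet_Ioc (hsubc.mono_set hsub1)
      (hsubc.mono_set hsub2)] at hzero
    linarith
  have hfin : ∫ x in Set.Icc a b, (f x - g x) * ψ x ∂μ =
      (∫ x in Set.Icc a b, f x * φ x ∂μ) - ∫ x in Set.Icc a b, g x * φ x ∂μ := by
    have e1 : ∫ x in Set.Icc a b, f x * ψ x ∂μ = ∫ x in Set.Icc a b, f x * φ x ∂μ :=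
      setIntegral_congr_fun measurableSet_Icc (fun x hx => by rw [hψeq x hx])
    have e2 : ∫ x in Set.Icc a b, g x * ψ x ∂μ = ∫ x in Set.Icc a b, g x * φ x ∂μ :=
      setIntegral_congr_fun measurableSet_Icc (fun x hx => by rw [hψeq x hx])
    calc ∫ x in Set.Icc a b, (f x - g x) * ψ x ∂μ
        = ∫ x in Set.Icc a b, (f x * ψ x - g x * ψ x) ∂μ := by
          simp [sub_mul]
      _ = (∫ x in Set.Icc a b, f x * ψ x ∂μ) - ∫ x in Set.Icc a b, g x * ψ x ∂μ :=
          integral_sub hfψ hgψ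
      _ = _ := by rw [e1, e2]
  linarith [hfin ▸ key]
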